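/- There exists a non-singular (n−1)×(n−1) matrix J₀ over ℤ[t^{±1}] such that for every n-braid β, B(β)* J₀ B(β) = J₀, where B is the reduced Burau representation and M* denotes the transpose of M with t replaced by t^{−1}. (Squier's theorem: the Burau representation is unitary.) -/

import Mathlib

open Matrix

noncomputable section

/-- Braid relations among the Artin generators `σ_1, …, σ_{n-1}`
(indexed by `Fin (n-1)`, with `i` standing for `σ_{i+1}`). -/
def braidRels (n : ℕ) : Set (FreeGroup (Fin (n - 1))) :=
  {r | (∃ i j : Fin (n - 1), (i : ℕ) + 1 = (j : ℕ) ∧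
          r = .of i * .of j * .of i * (.of j * .of i * .of j)⁻¹) ∨
       (∃ i j : Fin (n - 1), (i : ℕ) + 2 ≤ (j : ℕ) ∧
          r = .of i * .of j * (.of j * .of i)⁻¹)}

/-- The braid group `B_n` as a presented group. -/
abbrev Braid (n : ℕ) := PresentedGroup (braidRels n)

/-- The Artin generator `σ_{i+1}` of `B_n`. -/
def σg {n : ℕ} (i : Fin (n - 1)) : Braid n := PresentedGroup.of i

/-- The reduced Burau matrix of the Artin generator `σ_{m+1}` (0-based `m`), acting on the
`(n-1)`-dimensional module: the identity except in row `m`, which has entries `1` in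
column `m-1`, `−t` in column `m`, and `t` in column `m+1` (columns out of range omitted). -/
def burau {R : Type*} [CommRing R] (t : R) (n m : ℕ) :
    Matrix (Fin (n - 1)) (Fin (n - 1)) R :=
  fun a b =>
    if (a : ℕ) ≠ m then (if a = b then 1 else 0)
    else if (b : ℕ) = m then -t
    else if (b : ℕ) + 1 = m then 1
    else if (b : ℕ) = m + 1 then t
    else 0

namespace SquierAux

variable {F : Type*} [Field F]

/-- The Squier tridiagonal form: diagonal `-(1+t)`, superdiagonal `t`, subdiagonal `1`. -/
def Jmat (t : F) (k : ℕ) : Matrix (Fin k) (Fin k) F :=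
  fun i j => if (i : ℕ) = j then -(1+t) else if (i : ℕ) + 1 = j then t
    else if (j : ℕ) + 1 = i then 1 else 0

/-- Row vector of the rank-one update defining the Burau generator. -/
def wvec (t : F) (k m : ℕ) : Fin k → F :=
  fun j => if (j : ℕ) + 1 = m then 1 else if (j : ℕ) = m then -t-1
    else if (j : ℕ) = m + 1 then t else 0

lemma burau_eq (t : F) (n : ℕ) (m : Fin (n-1)) :
    burau t n (m : ℕ) = 1 + vecMulVec (Pi.single m 1) (wvec t (n-1) (m : ℕ)) := by
  ext a b
  simp only [burau, Matrix.add_apply, Matrix.one_apply, vecMulVec_apply, wvec,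
    Pi.single_apply, Fin.ext_iff, ne_eq]
  split_ifs <;> first | ring1 | (exfalso; omega)

lemma vecMulVec_mul (a b : Fin k → F) (M : Matrix (Fin k) (Fin k) F) :
    vecMulVec a b * M = vecMulVec a (b ᵥ* M) := by
  ext i j
  simp only [mul_apply, vecMulVec_apply, vecMul, dotProduct, Finset.mul_sum]
  exact Finset.sum_congr rfl fun x _ => by ring

lemma mul_vecMulVec (M : Matrix (Fin k) (Fin k) F) (a b : Fin k → F) :
    M * vecMulVec a b = vecMulVec (M *ᵥ a) b := by
  ext i j
  simp only [mul_apply, vecMulVec_apply, mulVec, dotProduct, Finset.sum_mul]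
  exact Finset.sum_congr rfl fun x _ => by ring

lemma vecMulVec_transpose (a b : Fin k → F) : (vecMulVec a b)ᵀ = vecMulVec b a := by
  ext i j; simp [vecMulVec_apply, mul_comm]

lemma vecMulVec_mul_vecMulVec (a b c d : Fin k → F) :
    vecMulVec a b * vecMulVec c d = (b ⬝ᵥ c) • vecMulVec a d := by
  rw [vecMulVec_mul]
  ext i j
  simp only [vecMulVec_apply, vecMul, dotProduct, Matrix.smul_apply, smul_eq_mul,
    Finset.sum_mul, Finset.mul_sum]
  exact Finset.sum_congr rfl fun x _ => by ring

end SquierAux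

namespace SquierAux

variable {F : Type*} [Field F]

lemma main_scalar (t : F) (ht : t ≠ 0) (k : ℕ) (m i j : Fin k) :
    wvec t⁻¹ k (m:ℕ) i * Jmat t k m j + Jmat t k i m * wvec t k (m:ℕ) j
      + (-(1+t)) * (wvec t⁻¹ k (m:ℕ) i * wvec t k (m:ℕ) j) = 0 := by
  simp only [Jmat, wvec]
  split_ifs <;> first | ring1 | (exfalso; omega) | (field_simp; ring1)

lemma key (t : F) (ht : t ≠ 0) (n : ℕ) (m : Fin (n-1)) :
    (burau t⁻¹ n (m:ℕ))ᵀ * Jmat t (n-1) * burau t n (m:ℕ) = Jmat t (n-1) := by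
  have hmm : Jmat t (n-1) m m = -(1+t) := by simp [Jmat]
  rw [burau_eq t⁻¹ n m, burau_eq t n m, transpose_add, transpose_one, vecMulVec_transpose,
    add_mul, one_mul, mul_add, mul_one, add_mul, vecMulVec_mul, single_one_vecMul,
    mul_vecMulVec, mulVec_single_one, vecMulVec_mul_vecMulVec, dotProduct_single_one, Matrix.row_apply, hmm]
  ext i j
  simp only [Matrix.add_apply, vecMulVec_apply, Matrix.smul_apply, smul_eq_mul,
    Matrix.transpose_apply, Matrix.row_apply, Matrix.col_apply]
  linear_combination main_scalar t ht (n-1) m i j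

end SquierAux


namespace SquierAux

variable {F : Type*} [Field F]

def pp (t : F) (c : ℕ) : F := ∑ j ∈ Finset.range (c+1), t^j

lemma pp_succ (t : F) (c : ℕ) : pp t (c+1) = pp t c + t^(c+1) := Finset.sum_range_succ _ _

lemma pp_zero (t : F) : pp t 0 = 1 := by simp [pp]

def Lmat (t : F) (k : ℕ) : Matrix (Fin k) (Fin k) F :=
  fun i j => if (i : ℕ) = j then 1
    else if (j : ℕ) + 1 = i then -(pp t j)/(pp t (j+1)) else 0

def Umat (t : F) (k : ℕ) : Matrix (Fin k) (Fin k) F :=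
  fun i j => if (i : ℕ) = j then -(pp t (i+1))/(pp t i)
    else if (i : ℕ) + 1 = j then t else 0

lemma sum_eq_two {k : ℕ} (f : Fin k → F) (a b : Fin k) (hab : a ≠ b)
    (h : ∀ c, c ≠ a → c ≠ b → f c = 0) : ∑ c, f c = f a + f b := by
  rw [← Finset.sum_pair hab]
  refine (Finset.sum_subset (Finset.subset_univ _) fun c _ hc => ?_).symm
  simp only [Finset.mem_insert, Finset.mem_singleton, not_or] at hc
  exact h c hc.1 hc.2

lemma LU (t : F) (hp : ∀ c, pp t c ≠ 0) (k : ℕ) :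
    Jmat t k = Lmat t k * Umat t k := by
  ext i j
  rw [mul_apply]
  by_cases hi : (i : ℕ) = 0
  · rw [Finset.sum_eq_single i]
    · simp only [Jmat, Lmat, Umat]
      split_ifs <;>
        first
          | ring1 | (exfalso; omega)
          | (rw [hi, pp_succ, pp_zero]; try field_simp
             try ring1)
    · intro c _ hc
      have hc' : (c : ℕ) ≠ (i : ℕ) := fun h => hc (Fin.ext h)
      simp only [Lmat, Umat]
      split_ifs <;> first | (exfalso; omega) | ring1
    · simp
  · have hi1 : (i : ℕ) - 1 < k := by omega
    set a : Fin k := ⟨(i : ℕ) - 1, hi1⟩ with ha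
    have hav : (a : ℕ) = (i : ℕ) - 1 := rfl
    have hai : (a : ℕ) + 1 = (i : ℕ) := by omega
    have haine : a ≠ i := by
      intro h
      rw [h] at hai
      omega
    rw [sum_eq_two _ a i haine ?side]
    case side =>
      intro c hca hci
      have hca' : (c : ℕ) ≠ (a : ℕ) := fun h => hca (Fin.ext h)
      have hci' : (c : ℕ) ≠ (i : ℕ) := fun h => hci (Fin.ext h)
      simp only [Lmat, Umat]
      split_ifs <;> first | (exfalso; omega) | ring1
    · obtain ⟨b, hb⟩ : ∃ b, (i : ℕ) = b + 1 := ⟨(i : ℕ) - 1, by omega⟩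
      simp only [Jmat, Lmat, Umat, hav, hb, Nat.add_sub_cancel, eq_self_iff_true, if_true]
      have h1 : pp t (b + 1) = pp t b + t^(b+1) := pp_succ t _
      have h2 : pp t (b + 1 + 1) = pp t (b+1) + t^(b+1+1) := pp_succ t _
      split_ifs <;>
        first
          | ring1 | (exfalso; omega)
          | (field_simp [hp]; ring1)
          | (field_simp [hp]; try rw [h2]; try rw [h1]; ring1)

lemma det_Jmat_ne_zero (t : F) (hp : ∀ c, pp t c ≠ 0) (k : ℕ) :
    (Jmat t k).det ≠ 0 := by
  rw [LU t hp k, Matrix.det_mul]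
  have hL : (Lmat t k).det = 1 := by
    rw [Matrix.det_of_lowerTriangular]
    · simp [Lmat]
    · intro i j hij
      have h' : (i : ℕ) < (j : ℕ) := hij
      simp only [Lmat]
      split_ifs <;> first | (exfalso; omega) | rfl
  have hU : (Umat t k).det ≠ 0 := by
    rw [Matrix.det_of_upperTriangular]
    · refine Finset.prod_ne_zero_iff.mpr fun i _ => ?_
      simp only [Umat, if_pos rfl]
      exact div_ne_zero (neg_ne_zero.mpr (hp _)) (hp _)
    · intro i j hij
      have h' : (j : ℕ) < (i : ℕ) := hij
      simp only [Umat]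
      split_ifs <;> first | (exfalso; omega) | rfl
  rw [hL, one_mul]
  exact hU

end SquierAux

namespace SquierAux

lemma ppX_ne_zero (c : ℕ) : pp (RatFunc.X : RatFunc ℚ) c ≠ 0 := by
  have h : pp (RatFunc.X : RatFunc ℚ) c
      = algebraMap (Polynomial ℚ) (RatFunc ℚ) (∑ j ∈ Finset.range (c+1), Polynomial.X ^ j) := by
    rw [map_sum, pp]
    refine Finset.sum_congr rfl fun j _ => ?_
    rw [map_pow, RatFunc.algebraMap_X]
  rw [h]
  apply RatFunc.algebraMap_ne_zero
  intro h0
  have h1 := congrArg (Polynomial.eval (1:ℚ)) h0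
  simp [Polynomial.eval_finset_sum] at h1
  have : (0:ℚ) < (c:ℚ) + 1 := by positivity
  linarith

lemma burau_map_conj (conj : RatFunc ℚ →+* RatFunc ℚ) (hc : conj RatFunc.X = (RatFunc.X)⁻¹)
    (n m : ℕ) :
    (burau (RatFunc.X : RatFunc ℚ) n m).map conj
      = burau ((RatFunc.X : RatFunc ℚ)⁻¹) n m := by
  ext a b
  simp only [burau, Matrix.map_apply]
  split_ifs <;> simp [hc]

end SquierAux


open SquierAux

/-- **Squier.** The reduced Burau representation is unitary: there is a
non-singular matrix `J₀` over `ℤ[t^{±1}]` with `B(β)* J₀ B(β) = J₀` for every braid `β`,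
where `M*` is the transpose of `M` with `t` replaced by `t⁻¹` (implemented by the ring
homomorphism `conj` with `conj t = t⁻¹`). -/
theorem burau_unitary (n : ℕ) (B : Braid n →* GL (Fin (n - 1)) (RatFunc ℚ))
    (hB : ∀ m : Fin (n - 1),
      (B (σg m) : Matrix (Fin (n - 1)) (Fin (n - 1)) (RatFunc ℚ)) =
        burau (RatFunc.X : RatFunc ℚ) n (m : ℕ))
    (conj : RatFunc ℚ →+* RatFunc ℚ) (hc : conj RatFunc.X = (RatFunc.X)⁻¹) :
    ∃ J0 : Matrix (Fin (n - 1)) (Fin (n - 1)) (RatFunc ℚ),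
      (∀ a b, J0 a b ∈ Subring.closure {(RatFunc.X : RatFunc ℚ), (RatFunc.X)⁻¹}) ∧
      J0.det ≠ 0 ∧
      ∀ β : Braid n,
        ((B β : Matrix (Fin (n - 1)) (Fin (n - 1)) (RatFunc ℚ)).map conj)ᵀ * J0 *
          (B β : Matrix (Fin (n - 1)) (Fin (n - 1)) (RatFunc ℚ)) = J0 := by
  refine ⟨Jmat RatFunc.X (n-1), ?_, det_Jmat_ne_zero _ ppX_ne_zero _, ?_⟩
  · intro a b
    have hXmem : (RatFunc.X : RatFunc ℚ)
        ∈ Subring.closure {(RatFunc.X : RatFunc ℚ), (RatFunc.X)⁻¹} :=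
      Subring.subset_closure (by simp)
    simp only [Jmat]
    split_ifs
    · exact neg_mem (add_mem (one_mem _) hXmem)
    · exact hXmem
    · exact one_mem _
    · exact zero_mem _
  · intro β
    have hβ : β ∈ Subgroup.closure (Set.range (PresentedGroup.of (rels := braidRels n))) := by
      rw [PresentedGroup.closure_range_of]
      trivial
    refine Subgroup.closure_induction ?_ ?_ ?_ ?_ hβ
    · rintro x ⟨m, rfl⟩
      have hBm : (B (PresentedGroup.of m) : Matrix (Fin (n-1)) (Fin (n-1)) (RatFunc ℚ))
          = burau (RatFunc.X : RatFunc ℚ) n (m : ℕ) := hB m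
      rw [hBm, burau_map_conj conj hc]
      exact key RatFunc.X RatFunc.X_ne_zero n m
    · have h1 : (B 1 : Matrix (Fin (n-1)) (Fin (n-1)) (RatFunc ℚ)) = 1 := by
        rw [_root_.map_one, Units.val_one]
      rw [h1, Matrix.map_one conj (map_zero conj) (map_one conj), transpose_one, one_mul, mul_one]
    · intro x y hx hy px py
      have hco : (B (x*y) : Matrix (Fin (n-1)) (Fin (n-1)) (RatFunc ℚ))
          = (B x : Matrix (Fin (n-1)) (Fin (n-1)) (RatFunc ℚ))
            * (B y : Matrix (Fin (n-1)) (Fin (n-1)) (RatFunc ℚ)) := by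
        rw [_root_.map_mul, Units.val_mul]
      set A := (B x : Matrix (Fin (n-1)) (Fin (n-1)) (RatFunc ℚ))
      set C := (B y : Matrix (Fin (n-1)) (Fin (n-1)) (RatFunc ℚ))
      rw [hco, Matrix.map_mul, transpose_mul]
      calc (C.map conj)ᵀ * (A.map conj)ᵀ * Jmat RatFunc.X (n-1) * (A * C)
          = (C.map conj)ᵀ * ((A.map conj)ᵀ * Jmat RatFunc.X (n-1) * A) * C := by
            simp only [mul_assoc]
        _ = (C.map conj)ᵀ * Jmat RatFunc.X (n-1) * C := by rw [px]
        _ = Jmat RatFunc.X (n-1) := py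
    · intro x hx px
      set A := (B x : Matrix (Fin (n-1)) (Fin (n-1)) (RatFunc ℚ))
      set A' := (B x⁻¹ : Matrix (Fin (n-1)) (Fin (n-1)) (RatFunc ℚ))
      have h2 : A * A' = 1 := by
        rw [← Units.val_mul, ← _root_.map_mul, mul_inv_cancel, _root_.map_one, Units.val_one]
      have h1' : (A'.map conj)ᵀ * (A.map conj)ᵀ = 1 := by
        rw [← transpose_mul, ← Matrix.map_mul, h2,
          Matrix.map_one conj (map_zero conj) (map_one conj), transpose_one]
      calc (A'.map conj)ᵀ * Jmat RatFunc.X (n-1) * A'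
          = (A'.map conj)ᵀ * ((A.map conj)ᵀ * Jmat RatFunc.X (n-1) * A) * A' := by rw [px]
        _ = ((A'.map conj)ᵀ * (A.map conj)ᵀ) * Jmat RatFunc.X (n-1) * (A * A') := by
            simp only [mul_assoc]
        _ = Jmat RatFunc.X (n-1) := by rw [h1', h2, one_mul, mul_one]
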